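/- Let S be a finite semigroup in which all idempotents are central and such that for every idempotent e ∈ S and every a ∈ S with ea = a, the subsemigroup ⟨a⟩ generated by a is a group. Let k ≥ 1 be such that x^k is idempotent for every x ∈ S, and set C := { x^{k+1} : x ∈ S }. Then every product of |S \ C| + 1 elements of S lies in C; that is, the Rees quotient S/C is |S/C|-nilpotent. -/

import Mathlib

/-- Product of a nonempty list of semigroup elements: `a * l₁ * l₂ * ⋯`. -/
def sgProd {S : Type*} [Semigroup S] (a : S) (l : List S) : S :=
  l.foldl (· * ·) a

/-- `spow a m = a ^ m` for `m ≥ 1` (with junk value `a` at `m = 0`). -/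
def spow {S : Type*} [Semigroup S] (a : S) : ℕ → S
  | 0 => a
  | 1 => a
  | (n + 2) => spow a (n + 1) * a

/-- A (two-sided) ideal of a semigroup: a nonempty subset absorbing
multiplication on both sides. -/
def IsIdeal {S : Type*} [Semigroup S] (I : Set S) : Prop :=
  I.Nonempty ∧ ∀ s : S, ∀ x ∈ I, s * x ∈ I ∧ x * s ∈ I

/-- A subset of a semigroup that is a subsemigroup which is a group. -/
def IsGroupSubset {S : Type*} [Semigroup S] (G : Set S) : Prop :=
  (∀ x ∈ G, ∀ y ∈ G, x * y ∈ G) ∧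
    ∃ e ∈ G, (∀ x ∈ G, e * x = x ∧ x * e = x) ∧
      ∀ x ∈ G, ∃ y ∈ G, x * y = e ∧ y * x = e

/-- A subset of a semigroup that is a Clifford semigroup in its own right:
it is closed under multiplication, completely regular (every element lies in a
subsemigroup which is a group), and its idempotents are central in it. -/
def IsCliffordSubset {S : Type*} [Semigroup S] (C : Set S) : Prop :=
  (∀ x ∈ C, ∀ y ∈ C, x * y ∈ C) ∧
    (∀ x ∈ C, ∃ G ⊆ C, IsGroupSubset G ∧ x ∈ G) ∧
    (∀ e ∈ C, e * e = e → ∀ s ∈ C, e * s = s * e)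

/-- A semigroup is a Clifford semigroup. -/
def IsCliffordSG (C : Type*) [Semigroup C] : Prop :=
  IsCliffordSubset (Set.univ : Set C)

/-- A semigroup is nilpotent: for some `d`, any two products of at least `d`
elements are equal. -/
def IsNilpotentSG (N : Type*) [Semigroup N] : Prop :=
  ∃ d : ℕ, ∀ (a b : N) (l l' : List N),
    d ≤ l.length + 1 → d ≤ l'.length + 1 → sgProd a l = sgProd b l'

lemma spow_succ' {S : Type*} [Semigroup S] (a : S) {m : ℕ} (hm : 1 ≤ m) :
    spow a (m + 1) = spow a m * a := by
  cases m with
  | zero => omega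
  | succ n => rfl

lemma spow_add' {S : Type*} [Semigroup S] (a : S) {m n : ℕ} (hm : 1 ≤ m) (hn : 1 ≤ n) :
    spow a (m + n) = spow a m * spow a n := by
  induction n with
  | zero => omega
  | succ n ih =>
    rcases Nat.eq_or_lt_of_le hn with h | h
    · have : n = 0 := by omega
      subst this
      exact spow_succ' a hm
    · have hn1 : 1 ≤ n := by omega
      rw [← Nat.add_assoc, spow_succ' a (by omega : 1 ≤ m + n), ih hn1,
        spow_succ' a hn1, mul_assoc]

lemma sgProd_mul {S : Type*} [Semigroup S] (x y : S) (m : List S) :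
    sgProd (x * y) m = x * sgProd y m := by
  induction m generalizing y with
  | nil => rfl
  | cons c m ih =>
    show sgProd (x * y * c) m = x * sgProd (y * c) m
    rw [mul_assoc, ih]

lemma sgProd_append {S : Type*} [Semigroup S] (a : S) (u v : List S) :
    sgProd a (u ++ v) = sgProd (sgProd a u) v := by
  simp [sgProd, List.foldl_append]

/-- In a finite semigroup with central idempotents where `e * a = a`
(`e` idempotent) forces `⟨a⟩` to be a group, if `x ^ k` is idempotent for all
`x` (`k ≥ 1`) and `C := { x ^ (k+1) : x ∈ S }`, then every product of
`|S \ C| + 1` elements of `S` lies in `C`. -/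
theorem stmt6 {S : Type*} [Semigroup S] [Finite S] [Nonempty S]
    (hcen : ∀ e s : S, e * e = e → e * s = s * e)
    (hgrp : ∀ e a : S, e * e = e → e * a = a → ∃ m, 2 ≤ m ∧ a = spow a m)
    (k : ℕ) (hk : 1 ≤ k) (hik : ∀ x : S, spow x k * spow x k = spow x k) :
    ∀ (a : S) (l : List S),
      l.length = Set.ncard {y : S | ∃ x : S, y = spow x (k + 1)}ᶜ →
      sgProd a l ∈ {y : S | ∃ x : S, y = spow x (k + 1)} := by
  set C : Set S := {y : S | ∃ x : S, y = spow x (k + 1)} with hC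
  -- from b = b^m (m ≥ 2), deduce b^(k+1) = b
  have key0 : ∀ b : S, (∃ m, 2 ≤ m ∧ b = spow b m) → spow b (k + 1) = b := by
    rintro b ⟨m, hm2, hb⟩
    -- iterate: b = spow b (1 + t*(m-1))
    have hiter : ∀ t : ℕ, b = spow b (1 + t * (m - 1)) := by
      intro t
      induction t with
      | zero => simp [spow]
      | succ t ih =>
        have h1 : 1 + (t + 1) * (m - 1) = (1 + t * (m - 1)) + (m - 1) := by ring
        rw [h1, spow_add' b (by omega) (by omega : 1 ≤ m - 1), ← ih]
        calc b = spow b m := hb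
        _ = spow b (1 + (m-1)) := by congr 1; omega
        _ = spow b 1 * spow b (m-1) := spow_add' b le_rfl (by omega)
        _ = b * spow b (m-1) := by rfl
    obtain ⟨N, hNk, hbN⟩ : ∃ N, k + 1 ≤ N ∧ b = spow b N :=
      ⟨1 + k * (m - 1), by nlinarith [Nat.one_le_iff_ne_zero.mpr (by omega : m - 1 ≠ 0)],
        hiter k⟩
    have hdec : b = spow b k * spow b (N - k) := by
      have h1 : 1 ≤ N - k := by omega
      have h2 := spow_add' b hk h1
      rw [show k + (N - k) = N by omega] at h2
      rw [← h2]; exact hbN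
    have heb : spow b k * b = b := by
      calc spow b k * b = spow b k * (spow b k * spow b (N - k)) := by rw [← hdec]
      _ = (spow b k * spow b k) * spow b (N - k) := (mul_assoc _ _ _).symm
      _ = spow b k * spow b (N - k) := by rw [hik]
      _ = b := hdec.symm
    rw [spow_succ' b hk, heb]
  have key : ∀ b e : S, e * e = e → e * b = b → spow b (k + 1) = b := by
    intro b e he heb
    exact key0 b (hgrp e b he heb)
  -- right and left absorption for the fixed-point property
  have fp_mulr : ∀ b c : S, spow b (k + 1) = b → spow (b * c) (k + 1) = b * c := by
    intro b c hb
    have heb : spow b k * b = b := by rw [← spow_succ' b hk, hb]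
    have : spow b k * (b * c) = b * c := by rw [← mul_assoc, heb]
    exact key (b * c) (spow b k) (hik b) this
  -- products starting from a fixed point stay fixed points
  have fp_prod : ∀ (m : List S) (b : S), spow b (k + 1) = b →
      spow (sgProd b m) (k + 1) = sgProd b m := by
    intro m
    induction m with
    | nil => intro b hb; exact hb
    | cons c m ih =>
      intro b hb
      show spow (sgProd (b * c) m) (k+1) = sgProd (b * c) m
      exact ih (b * c) (fp_mulr b c hb)
  -- membership in C gives the fixed point property
  have memC_fp : ∀ y : S, y ∈ C → spow y (k + 1) = y := by
    rintro y ⟨x, rfl⟩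
    have he : spow x k * spow x k = spow x k := hik x
    have hexy : spow x k * spow x (k + 1) = spow x (k + 1) := by
      have h1 : spow x k * spow x (k+1) = spow x (k + (k+1)) :=
        (spow_add' x hk (by omega)).symm
      have h2 : spow x (k + (k+1)) = spow x (k + k) * x := by
        have : k + (k+1) = (k + k) + 1 := by omega
        rw [this, spow_succ' x (by omega)]
      have h3 : spow x (k + k) = spow x k := by
        rw [spow_add' x hk hk, hik]
      rw [h1, h2, h3, ← spow_succ' x hk]
    exact key (spow x (k+1)) (spow x k) he hexy
  intro a l hlen
  by_contra hout
  -- all prefix products lie outside C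
  set n := l.length with hn
  have hsplit : ∀ i : ℕ, sgProd a l = sgProd (sgProd a (l.take i)) (l.drop i) := by
    intro i
    conv_lhs => rw [← List.take_append_drop i l]
    exact sgProd_append a _ _
  have hpref : ∀ i : ℕ, sgProd a (l.take i) ∈ Cᶜ := by
    intro i
    intro hmem
    have hfp := memC_fp _ hmem
    have : spow (sgProd a l) (k+1) = sgProd a l := by
      rw [hsplit i]; exact fp_prod _ _ hfp
    exact hout ⟨_, this.symm⟩
  -- pigeonhole on the n+1 prefix products
  have hcard : (Cᶜ : Set S).ncard < (Set.univ : Set (Fin (n+1))).ncard := by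
    rw [Set.ncard_univ, Nat.card_eq_fintype_card, Fintype.card_fin]
    omega
  obtain ⟨i, -, j, -, hij, hfeq⟩ :=
    Set.exists_ne_map_eq_of_ncard_lt_of_maps_to hcard
      (fun (i : Fin (n+1)) _ => hpref i.1) (Set.toFinite _)
  -- wlog i < j
  wlog hlt : (i : ℕ) < (j : ℕ) generalizing i j
  · have hvne : (i : ℕ) ≠ (j : ℕ) := fun h => hij (Fin.ext h)
    exact this j i hij.symm hfeq.symm (by omega)
  · -- the middle factor
    have hjn : (j : ℕ) ≤ n := by omega
    have htake : l.take (j : ℕ) = l.take (i : ℕ) ++ (l.take (j : ℕ)).drop (i : ℕ) := by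
      conv_lhs => rw [← List.take_append_drop (i : ℕ) (l.take (j : ℕ))]
      rw [List.take_take, min_eq_left (le_of_lt hlt)]
    set w := (l.take (j : ℕ)).drop (i : ℕ) with hw
    have hwlen : 0 < w.length := by
      rw [hw, List.length_drop, List.length_take]
      omega
    obtain ⟨c, w', hcw⟩ : ∃ c w', w = c :: w' := by
      cases hwe : w with
      | nil => rw [hwe] at hwlen; simp at hwlen
      | cons c w' => exact ⟨c, w', rfl⟩
    set p := sgProd a (l.take (i : ℕ)) with hp
    have hpq : p = p * sgProd c w' := by
      have h1 : sgProd a (l.take (j : ℕ)) = sgProd p w := by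
        rw [htake]; exact sgProd_append a _ _
      have h2 : sgProd p w = p * sgProd c w' := by
        rw [hcw]
        show sgProd (p * c) w' = p * sgProd c w'
        exact sgProd_mul p c w'
      rw [← h2, ← h1, hfeq]
    set q := sgProd c w' with hq
    have habs : ∀ t : ℕ, 1 ≤ t → p = p * spow q t := by
      intro t
      induction t with
      | zero => omega
      | succ t ih =>
        intro _
        rcases Nat.eq_zero_or_pos t with h0 | h1
        · subst h0; simpa [spow] using hpq
        · rw [spow_succ' q h1, ← mul_assoc, ← ih h1, ← hpq]
    have hpe : p = p * spow q k := habs k hk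
    have hep : spow q k * p = p := by
      rw [hcen (spow q k) p (hik q), ← hpe]
    have : spow p (k+1) = p := key p (spow q k) (hik q) hep
    exact hpref (i : ℕ) ⟨p, this.symm⟩
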